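/- Let V : ℝ³ → ℝ be continuous with V(λx) = λ^s V(x) for all λ > 0 and some s > 2, and V(x) > 0 for |x| = 1. Then lim_{γ → 0⁺} E^TF_{γ,1} = inf { V(x) − (1/4) r(x)² : x ∈ ℝ³ }. -/

import Mathlib

open MeasureTheory Filter Topology

noncomputable section

/-- Three-dimensional Euclidean space. -/
abbrev E3 := EuclideanSpace ℝ (Fin 3)

/-- The distance `r(x) = √(x₁² + x₂²)` from `x` to the `x₃`-axis. -/
def rax (x : E3) : ℝ := Real.sqrt (x 0 ^ 2 + x 1 ^ 2)

/-- The integrand of the 3D Thomas–Fermi functional: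
`V ρ − (Ω²/4) r² ρ + g ρ²`. -/
def tfIntegrand (V : E3 → ℝ) (g Ω : ℝ) (ρ : E3 → ℝ) (x : E3) : ℝ :=
  V x * ρ x - Ω ^ 2 / 4 * rax x ^ 2 * ρ x + g * ρ x ^ 2

/-- Admissible densities for the 3D Thomas–Fermi problem: measurable, nonnegative,
in `L¹ ∩ L²`, with finite potential terms and unit mass. -/
def tfAdmissible (V : E3 → ℝ) (ρ : E3 → ℝ) : Prop :=
  Measurable ρ ∧ (∀ x, 0 ≤ ρ x) ∧ Integrable ρ ∧ Integrable (fun x => ρ x ^ 2) ∧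
    Integrable (fun x => V x * ρ x) ∧ Integrable (fun x => rax x ^ 2 * ρ x) ∧
    (∫ x, ρ x) = 1

/-- The 3D Thomas–Fermi energy `E^TF_{g,Ω}`. -/
def ETF (V : E3 → ℝ) (g Ω : ℝ) : ℝ :=
  sInf { e | ∃ ρ : E3 → ℝ, tfAdmissible V ρ ∧ e = ∫ x, tfIntegrand V g Ω ρ x }

/-- The candidate Thomas–Fermi minimizer with chemical potential `μ`:
`ρ^TF_{g,Ω}(x) = (1/(2g)) [μ + (Ω²/4) r(x)² − V(x)]₊`. -/
def rhoTF (V : E3 → ℝ) (g Ω μ : ℝ) (x : E3) : ℝ :=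
  1 / (2 * g) * max (μ + Ω ^ 2 / 4 * rax x ^ 2 - V x) 0

/-- Homogeneity of degree `s`: `V(λx) = λ^s V(x)` for all `λ > 0`. -/
def Homogeneous (V : E3 → ℝ) (s : ℝ) : Prop :=
  ∀ lam : ℝ, 0 < lam → ∀ x : E3, V (lam • x) = lam ^ s * V x

/-- The effective potential `W(x) = V(x) − (1/4) r(x)²`. -/
def Wpot (V : E3 → ℝ) (x : E3) : ℝ := V x - 1 / 4 * rax x ^ 2

lemma rax_nonneg (x : E3) : 0 ≤ rax x := Real.sqrt_nonneg _

lemma rax_le_norm (x : E3) : rax x ≤ ‖x‖ := by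
  rw [EuclideanSpace.norm_eq]
  apply Real.sqrt_le_sqrt
  simp [Fin.sum_univ_three, sq_abs]
  positivity

lemma continuous_rax : Continuous rax := by
  unfold rax; fun_prop

lemma continuous_wpot (V : E3 → ℝ) (hVc : Continuous V) : Continuous (Wpot V) := by
  unfold Wpot
  exact hVc.sub ((continuous_const.mul (continuous_rax.pow 2)))

lemma wpot_bddBelow (V : E3 → ℝ) (hVc : Continuous V)
    (s : ℝ) (hs : 2 < s) (hhom : Homogeneous V s)
    (hVpos : ∀ x : E3, ‖x‖ = 1 → 0 < V x) :
    BddBelow (Set.range (Wpot V)) := by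
  -- minimum of V on the unit sphere
  obtain ⟨z, hz, hzmin'⟩ := (isCompact_sphere (0:E3) 1).exists_isMinOn
    ⟨EuclideanSpace.single 0 1, by simp⟩ hVc.continuousOn
  have hzmin := isMinOn_iff.1 hzmin'
  set c : ℝ := V z with hc
  have hzn : ‖z‖ = 1 := by simpa using hz
  have hcpos : 0 < c := hVpos z hzn
  -- scaling lower bound for V
  have hVlb : ∀ x : E3, x ≠ 0 → c * ‖x‖ ^ s ≤ V x := by
    intro x hx
    have hn : 0 < ‖x‖ := norm_pos_iff.2 hx
    have hu : ‖‖x‖⁻¹ • x‖ = 1 := by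
      rw [norm_smul, norm_inv, norm_norm, inv_mul_cancel₀ hn.ne']
    have := hhom ‖x‖ hn (‖x‖⁻¹ • x)
    rw [smul_smul, mul_inv_cancel₀ hn.ne', one_smul] at this
    rw [this]
    have := hzmin _ (mem_sphere_zero_iff_norm.2 hu)
    have hpow : (0:ℝ) ≤ ‖x‖ ^ s := Real.rpow_nonneg hn.le _
    nlinarith [hpow]
  set R : ℝ := max 1 ((1/(4*c)) ^ (1/(s-2))) with hR
  have hR1 : 1 ≤ R := le_max_left _ _
  -- for ‖x‖ ≥ R, Wpot V x ≥ 0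
  have houter : ∀ x : E3, R ≤ ‖x‖ → 0 ≤ Wpot V x := by
    intro x hxR
    have hnpos : 0 < ‖x‖ := lt_of_lt_of_le one_pos (hR1.trans hxR)
    have hs2 : 0 < s - 2 := by linarith
    have hkey : 1/(4*c) ≤ ‖x‖ ^ (s-2) := by
      have h1 : ((1/(4*c)) ^ (1/(s-2))) ^ (s-2) ≤ ‖x‖ ^ (s-2) := by
        apply Real.rpow_le_rpow (Real.rpow_nonneg (by positivity) _)
          ((le_max_right _ _).trans hxR) hs2.le
      rwa [← Real.rpow_mul (by positivity),
        one_div_mul_cancel hs2.ne', Real.rpow_one] at h1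
    have hsplit : ‖x‖ ^ s = ‖x‖ ^ (s-2) * ‖x‖ ^ 2 := by
      rw [← Real.rpow_two, ← Real.rpow_add hnpos]
      ring_nf
    have hVx : c * ‖x‖ ^ s ≤ V x := hVlb x (fun h => by simp [h] at hnpos)
    have hrx : rax x ^ 2 ≤ ‖x‖ ^ 2 := pow_le_pow_left₀ (rax_nonneg x) (rax_le_norm x) 2
    have hmul : c * (1/(4*c)) * ‖x‖^2 ≤ c * ‖x‖ ^ (s-2) * ‖x‖^2 := by
      have := mul_le_mul_of_nonneg_left hkey hcpos.le
      nlinarith [sq_nonneg ‖x‖]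
    have hcc : c * (1/(4*c)) = 1/4 := by field_simp
    unfold Wpot
    nlinarith [hVx, hsplit, hrx]
  obtain ⟨w, hw, hwmin'⟩ := (isCompact_closedBall (0:E3) R).exists_isMinOn
    ⟨0, Metric.mem_closedBall_self (by linarith)⟩ (continuous_wpot V hVc).continuousOn
  have hwmin := isMinOn_iff.1 hwmin'
  refine ⟨min (Wpot V w) 0, ?_⟩
  rintro _ ⟨x, rfl⟩
  by_cases hx : ‖x‖ ≤ R
  · exact le_trans (min_le_left _ _) (hwmin x (mem_closedBall_zero_iff.2 hx))
  · exact le_trans (min_le_right _ _) (houter x (le_of_not_ge hx))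

lemma etf_lower (V : E3 → ℝ) (hb : BddBelow (Set.range (Wpot V)))
    (γ : ℝ) (hγ : 0 ≤ γ) :
    ∀ e ∈ {e | ∃ ρ : E3 → ℝ, tfAdmissible V ρ ∧ e = ∫ x, tfIntegrand V γ 1 ρ x},
      (⨅ x : E3, Wpot V x) ≤ e := by
  rintro e ⟨ρ, ⟨hm, hpos, hint, hint2, hVρ, hrρ, hmass⟩, rfl⟩
  set m := ⨅ x : E3, Wpot V x with hmdef
  have hmW : ∀ x : E3, m ≤ Wpot V x := fun x => ciInf_le hb x
  have h1 : Integrable (fun x => V x * ρ x - 1/4 * (rax x ^ 2 * ρ x)) :=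
    hVρ.sub (hrρ.const_mul _)
  have heq : (fun x => tfIntegrand V γ 1 ρ x)
      = fun x => (V x * ρ x - 1/4 * (rax x ^ 2 * ρ x)) + γ * ρ x ^ 2 := by
    funext x; unfold tfIntegrand; ring
  rw [heq, integral_add h1 (hint2.const_mul γ)]
  have hlow : m ≤ ∫ x, (V x * ρ x - 1/4 * (rax x ^ 2 * ρ x)) := by
    have hpt : ∀ x, m * ρ x ≤ V x * ρ x - 1/4 * (rax x ^ 2 * ρ x) := by
      intro x
      have := mul_le_mul_of_nonneg_right (hmW x) (hpos x)
      unfold Wpot at this; nlinarith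
    calc m = m * ∫ x, ρ x := by rw [hmass]; ring
    _ = ∫ x, m * ρ x := (integral_const_mul m ρ).symm
    _ ≤ _ := integral_mono (hint.const_mul m) h1 hpt
  have hpos2 : 0 ≤ ∫ x, γ * ρ x ^ 2 :=
    integral_nonneg (fun x => by positivity)
  linarith

lemma etf_upper (V : E3 → ℝ) (hVc : Continuous V)
    (hb : BddBelow (Set.range (Wpot V))) (ε : ℝ) (hε : 0 < ε) :
    ∃ C : ℝ, 0 < C ∧ ∀ γ : ℝ, 0 < γ →
      ∃ e ∈ {e | ∃ ρ : E3 → ℝ, tfAdmissible V ρ ∧ e = ∫ x, tfIntegrand V γ 1 ρ x},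
        e ≤ (⨅ x : E3, Wpot V x) + ε + γ * C := by
  set m := ⨅ x : E3, Wpot V x with hmdef
  have hlt : m < m + ε/2 := by linarith
  obtain ⟨x₀, hx₀⟩ := exists_lt_of_ciInf_lt hlt
  -- open set where W < m + ε
  have hopen : IsOpen {y : E3 | Wpot V y < m + ε} :=
    isOpen_lt (continuous_wpot V hVc) continuous_const
  obtain ⟨δ, hδ, hball⟩ := Metric.isOpen_iff.1 hopen x₀ (by simp; linarith)
  set A : Set E3 := Metric.closedBall x₀ (δ/2) with hA
  have hAsub : A ⊆ {y : E3 | Wpot V y < m + ε} :=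
    (Metric.closedBall_subset_ball (by linarith)).trans hball
  have hAmeas : MeasurableSet A := measurableSet_closedBall
  have hAcomp : IsCompact A := isCompact_closedBall _ _
  have hvpos' : 0 < volume A := by
    apply lt_of_lt_of_le (Metric.measure_ball_pos volume x₀ (by linarith : (0:ℝ) < δ/2))
    exact measure_mono Metric.ball_subset_closedBall
  have hvfin : volume A < ⊤ := hAcomp.measure_lt_top
  set v : ℝ := (volume A).toReal with hv
  have hvpos : 0 < v := ENNReal.toReal_pos hvpos'.ne' hvfin.ne
  set ρ : E3 → ℝ := A.indicator (fun _ => v⁻¹) with hρ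
  have hρint : Integrable ρ :=
    (integrable_indicator_iff hAmeas).2 (integrableOn_const hvfin.ne)
  have hind : ∀ (f : E3 → ℝ), (fun x => f x * ρ x) = A.indicator (fun x => f x * v⁻¹) := by
    intro f; funext x
    by_cases hx : x ∈ A <;> simp [hρ, Set.indicator_apply, hx]
  have hintf : ∀ (f : E3 → ℝ), Continuous f → Integrable (fun x => f x * ρ x) := by
    intro f hf
    rw [hind f]
    exact (integrable_indicator_iff hAmeas).2
      ((hf.continuousOn.integrableOn_compact hAcomp).mul_const _)
  have hρsq : (fun x => ρ x ^ 2) = A.indicator (fun _ => v⁻¹ ^ 2) := by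
    funext x; by_cases hx : x ∈ A <;> simp [hρ, Set.indicator_apply, hx]
  have hρsqint : Integrable (fun x => ρ x ^ 2) := by
    rw [hρsq]
    exact (integrable_indicator_iff hAmeas).2 (integrableOn_const hvfin.ne)
  have hmass : (∫ x, ρ x) = 1 := by
    rw [hρ, integral_indicator hAmeas, setIntegral_const, smul_eq_mul, measureReal_def, ← hv,
      mul_inv_cancel₀ hvpos.ne']
  refine ⟨v⁻¹, by positivity, fun γ hγ => ?_⟩
  have hadm : tfAdmissible V ρ := by
    refine ⟨measurable_const.indicator hAmeas,
      fun x => Set.indicator_nonneg (fun _ _ => by positivity) x,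
      hρint, hρsqint, hintf V hVc, hintf _ (continuous_rax.pow 2), hmass⟩
  refine ⟨∫ x, tfIntegrand V γ 1 ρ x, ⟨ρ, hadm, rfl⟩, ?_⟩
  -- compute the energy
  have hEint : (fun x => tfIntegrand V γ 1 ρ x)
      = A.indicator (fun x => Wpot V x * v⁻¹ + γ * v⁻¹ ^ 2) := by
    funext x
    by_cases hx : x ∈ A <;>
      simp [tfIntegrand, hρ, Set.indicator_apply, hx, Wpot] <;> ring
  rw [hEint, integral_indicator hAmeas]
  have hmono : ∫ x in A, (Wpot V x * v⁻¹ + γ * v⁻¹ ^ 2)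
      ≤ ∫ x in A, ((m + ε) * v⁻¹ + γ * v⁻¹ ^ 2) := by
    apply setIntegral_mono_on
    · exact (((continuous_wpot V hVc).continuousOn.integrableOn_compact hAcomp).mul_const
        _).add (integrableOn_const hvfin.ne)
    · exact integrableOn_const hvfin.ne
    · exact hAmeas
    · intro x hx
      have := hAsub hx
      simp only [Set.mem_setOf_eq] at this
      have h2 : Wpot V x * v⁻¹ ≤ (m + ε) * v⁻¹ :=
        mul_le_mul_of_nonneg_right this.le (by positivity)
      linarith
  have hconst : ∫ x in A, ((m + ε) * v⁻¹ + γ * v⁻¹ ^ 2)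
      = m + ε + γ * v⁻¹ := by
    rw [setIntegral_const, smul_eq_mul, measureReal_def, ← hv]
    field_simp
  linarith

/-- **Ultrarapid-rotation limit of the Thomas–Fermi energy**:
`lim_{γ → 0⁺} E^TF_{γ,1} = inf { V(x) − (1/4) r(x)² : x ∈ ℝ³ }`. -/
theorem tf3_energy_strong_rotation_limit (V : E3 → ℝ) (hVc : Continuous V)
    (s : ℝ) (hs : 2 < s) (hhom : Homogeneous V s)
    (hVpos : ∀ x : E3, ‖x‖ = 1 → 0 < V x) :
    Tendsto (fun γ : ℝ => ETF V γ 1) (𝓝[>] 0) (𝓝 (⨅ x : E3, Wpot V x)) := by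
  have hb := wpot_bddBelow V hVc s hs hhom hVpos
  set m := ⨅ x : E3, Wpot V x with hmdef
  rw [Metric.tendsto_nhds]
  intro ε hε
  obtain ⟨C, hC, hup⟩ := etf_upper V hVc hb (ε/2) (by linarith)
  have hmem : Set.Ioo (0:ℝ) (ε/(2*C)) ∈ 𝓝[>] (0:ℝ) :=
    Ioo_mem_nhdsGT_of_mem ⟨le_refl 0, by positivity⟩
  filter_upwards [hmem] with γ hγ
  obtain ⟨hγ0, hγlt⟩ := hγ
  obtain ⟨e, he, hle⟩ := hup γ hγ0
  have hlow := etf_lower V hb γ hγ0.le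
  have hETFlow : m ≤ ETF V γ 1 := le_csInf ⟨e, he⟩ hlow
  have hETFup : ETF V γ 1 ≤ e := csInf_le ⟨m, hlow⟩ he
  have hγC : γ * C < ε/2 := by
    have := mul_lt_mul_of_pos_right hγlt hC
    calc γ * C < ε/(2*C) * C := mul_lt_mul_of_pos_right hγlt hC
    _ = ε/2 := by field_simp
  rw [Real.dist_eq, abs_lt]
  constructor <;> [linarith; linarith [hle, hγC]]
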